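/- Let X be a Banach space and consider on 𝕀 = ℤ the difference equation u_{t+1} = 𝓛_t u_t + 𝓝_t(u_t) + θ 𝓝̄_t(u_t) with parameter θ ∈ ℝ, where: (H1) 𝓛_t ∈ L(X) for t ∈ ℤ, there are projections P_t ∈ L(X) and reals K ≥ 1, 0 < α < β such that P_{t+1}𝓛_t = 𝓛_t P_t, the restriction 𝓛_t|_{ker P_t} : ker P_t → ker P_{t+1} is an isomorphism for all t ∈ ℤ, ‖Φ(t,s)P_s‖ ≤ K α^{t−s} for all s ≤ t, and ‖(Φ(t,s)|_{ker P_s})^{−1}(id_X − P_t)‖ ≤ K β^{s−t} for all s ≤ t, where Φ(t,s) := 𝓛_{t−1}⋯𝓛_s for s < t and Φ(t,t) := id_X; (H2) 𝓝_t, 𝓝̄_t : X → X satisfy 𝓝_t(0) = 𝓝̄_t(0) = 0, L := sup_{t∈ℤ} Lip 𝓝_t < ∞ and L̄ := sup_{t∈ℤ} Lip 𝓝̄_t < ∞. Fix δ ∈ (4KL, (β−α)/2] and suppose additionally L < δ/(6K). Then for every θ ∈ ℝ with L̄|θ| ≤ L and every γ ∈ [α+δ, β−δ], the zero sequence is the only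 entire solution of the equation that is γ-bounded: if (φ_t)_{t∈ℤ} in X satisfies φ_{t+1} = 𝓛_t φ_t + 𝓝_t(φ_t) + θ𝓝̄_t(φ_t) for all t ∈ ℤ and sup_{t∈ℤ} γ^{−t}‖φ_t‖ < ∞, then φ_t = 0 for all t ∈ ℤ. -/

import Mathlib

open Set

section Aux
variable {X : Type*} [NormedAddCommGroup X] [NormedSpace ℝ X]

lemma aux_ico_succ {s t : ℤ} (h : s ≤ t) :
    Finset.Ico s (t + 1) = insert t (Finset.Ico s t) := by
  ext r
  simp only [Finset.mem_Ico, Finset.mem_insert]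
  omega

lemma aux_cocycle (𝓛 : ℤ → X →L[ℝ] X) (Φ : ℤ → ℤ → X →L[ℝ] X)
    (hΦ0 : ∀ t, Φ t t = ContinuousLinearMap.id ℝ X)
    (hΦrec : ∀ s t, s ≤ t → Φ (t + 1) s = (𝓛 t).comp (Φ t s)) :
    ∀ a b c : ℤ, a ≤ b → b ≤ c → Φ c a = (Φ c b).comp (Φ b a) := by
  intro a b c hab
  refine Int.le_induction (motive := fun c _ => Φ c a = (Φ c b).comp (Φ b a)) ?_ ?_ c
  · ext x; simp [hΦ0]
  · intro c hc ih
    rw [hΦrec a c (hab.trans hc), hΦrec b c hc, ih, ContinuousLinearMap.comp_assoc]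

lemma aux_comm (𝓛 : ℤ → X →L[ℝ] X) (P : ℤ → X →L[ℝ] X)
    (hcomm : ∀ t : ℤ, (P (t + 1)).comp (𝓛 t) = (𝓛 t).comp (P t))
    (Φ : ℤ → ℤ → X →L[ℝ] X)
    (hΦ0 : ∀ t, Φ t t = ContinuousLinearMap.id ℝ X)
    (hΦrec : ∀ s t, s ≤ t → Φ (t + 1) s = (𝓛 t).comp (Φ t s)) :
    ∀ s t : ℤ, s ≤ t → (P t).comp (Φ t s) = (Φ t s).comp (P s) := by
  intro s t
  refine Int.le_induction (motive := fun t _ => (P t).comp (Φ t s) = (Φ t s).comp (P s)) ?_ ?_ t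
  · ext x; simp [hΦ0]
  · intro t ht ih
    rw [hΦrec s t ht, ← ContinuousLinearMap.comp_assoc, hcomm t,
      ContinuousLinearMap.comp_assoc, ih, ContinuousLinearMap.comp_assoc]

lemma aux_bij (𝓛 : ℤ → X →L[ℝ] X) (P : ℤ → X →L[ℝ] X)
    (hiso : ∀ t : ℤ,
      Set.BijOn (𝓛 t) (LinearMap.ker (P t : X →ₗ[ℝ] X) : Set X) (LinearMap.ker (P (t + 1) : X →ₗ[ℝ] X) : Set X))
    (Φ : ℤ → ℤ → X →L[ℝ] X)
    (hΦ0 : ∀ t, Φ t t = ContinuousLinearMap.id ℝ X)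
    (hΦrec : ∀ s t, s ≤ t → Φ (t + 1) s = (𝓛 t).comp (Φ t s)) :
    ∀ s t : ℤ, s ≤ t →
      Set.BijOn (Φ t s) (LinearMap.ker (P s : X →ₗ[ℝ] X) : Set X) (LinearMap.ker (P t : X →ₗ[ℝ] X) : Set X) := by
  intro s t
  refine Int.le_induction
    (motive := fun t _ => Set.BijOn (Φ t s) (LinearMap.ker (P s : X →ₗ[ℝ] X) : Set X) (LinearMap.ker (P t : X →ₗ[ℝ] X) : Set X))
    ?_ ?_ t
  · show Set.BijOn (Φ s s) _ _
    have h : ⇑(Φ s s) = id := by rw [hΦ0]; rfl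
    rw [h]; exact Set.bijOn_id _
  · intro t ht ih
    have h : ⇑(Φ (t + 1) s) = ⇑(𝓛 t) ∘ ⇑(Φ t s) := by
      rw [hΦrec s t ht]; rfl
    rw [h]; exact (hiso t).comp ih

lemma aux_voc (𝓛 : ℤ → X →L[ℝ] X)
    (Φ : ℤ → ℤ → X →L[ℝ] X)
    (hΦ0 : ∀ t, Φ t t = ContinuousLinearMap.id ℝ X)
    (hΦrec : ∀ s t, s ≤ t → Φ (t + 1) s = (𝓛 t).comp (Φ t s))
    (F : ℤ → X → X) (φ : ℤ → X)
    (hrec : ∀ t : ℤ, φ (t + 1) = 𝓛 t (φ t) + F t (φ t)) :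
    ∀ s t : ℤ, s ≤ t →
      φ t = Φ t s (φ s) + ∑ r ∈ Finset.Ico s t, Φ t (r + 1) (F r (φ r)) := by
  intro s t
  refine Int.le_induction
    (motive := fun t _ => φ t = Φ t s (φ s) + ∑ r ∈ Finset.Ico s t, Φ t (r + 1) (F r (φ r)))
    ?_ ?_ t
  · simp [hΦ0]
  · intro t ht ih
    rw [aux_ico_succ ht, Finset.sum_insert (by simp), hrec t, ih]
    rw [hΦrec s t ht]
    have h1 : ∀ r ∈ Finset.Ico s t, Φ (t + 1) (r + 1) (F r (φ r))
        = 𝓛 t (Φ t (r + 1) (F r (φ r))) := by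
      intro r hr
      rw [Finset.mem_Ico] at hr
      rw [hΦrec (r + 1) t (by omega)]; rfl
    rw [Finset.sum_congr rfl h1, hΦ0]
    simp only [map_add, map_sum, ContinuousLinearMap.coe_id', id_eq,
      ContinuousLinearMap.comp_apply]
    abel

lemma aux_geom_stable {q : ℝ} (hq0 : 0 < q) (hq1 : q < 1) :
    ∀ s t : ℤ, s ≤ t → ∑ r ∈ Finset.Ico s t, q ^ (t - 1 - r) ≤ (1 - q)⁻¹ := by
  intro s t
  refine Int.le_induction
    (motive := fun t _ => ∑ r ∈ Finset.Ico s t, q ^ (t - 1 - r) ≤ (1 - q)⁻¹) ?_ ?_ t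
  · simp only [Finset.Ico_self, Finset.sum_empty]
    have : (0:ℝ) < 1 - q := by linarith
    positivity
  · intro t ht ih
    rw [aux_ico_succ ht, Finset.sum_insert (by simp)]
    have h1 : ∀ r ∈ Finset.Ico s t, q ^ (t + 1 - 1 - r) = q * q ^ (t - 1 - r) := by
      intro r hr
      rw [← zpow_one_add₀ hq0.ne']
      ring_nf
    rw [Finset.sum_congr rfl h1, ← Finset.mul_sum]
    have h2 : (t + 1 - 1 - t : ℤ) = 0 := by ring
    rw [h2, zpow_zero]
    have h3 : q * ∑ r ∈ Finset.Ico s t, q ^ (t - 1 - r) ≤ q * (1 - q)⁻¹ :=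
      mul_le_mul_of_nonneg_left ih hq0.le
    have h5 : (0:ℝ) < 1 - q := by linarith
    have h4 : 1 + q * (1 - q)⁻¹ = (1 - q)⁻¹ := by
      field_simp; ring
    linarith

lemma aux_geom_unstable {q : ℝ} (hq0 : 0 < q) (hq1 : q < 1) :
    ∀ t s : ℤ, t ≤ s → ∑ r ∈ Finset.Ico t s, q ^ (r - t) ≤ (1 - q)⁻¹ := by
  intro t s hst
  have key : ∀ s : ℤ, t ≤ s →
      ∑ r ∈ Finset.Ico t s, q ^ (r - t) ≤ (1 - q)⁻¹ * (1 - q ^ (s - t)) := by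
    intro s
    refine Int.le_induction
      (motive := fun s _ => ∑ r ∈ Finset.Ico t s, q ^ (r - t) ≤ (1 - q)⁻¹ * (1 - q ^ (s - t))) ?_ ?_ s
    · simp
    · intro s hs ih
      rw [aux_ico_succ hs, Finset.sum_insert (by simp)]
      have h1 : q ^ (s + 1 - t) = q * q ^ (s - t) := by
        rw [← zpow_one_add₀ hq0.ne']; ring_nf
      have h2 : (0:ℝ) < 1 - q := by linarith
      have h3 : (1 - q)⁻¹ * (1 - q ^ (s + 1 - t))
          = (1 - q)⁻¹ * (1 - q ^ (s - t)) + q ^ (s - t) := by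
        rw [h1]; field_simp; ring
      rw [h3]
      linarith
  have h := key s hst
  have h2 : (0:ℝ) < q ^ (s - t) := zpow_pos hq0 _
  have h3 : (0:ℝ) < 1 - q := by linarith
  nlinarith [inv_pos.mpr h3]

end Aux

set_option maxHeartbeats 1000000 in
/-- triviality of bounded entire solutions, Theorem A.1(c):
for the parameter-dependent semilinear difference equation
`u_{t+1} = 𝓛_t u_t + 𝓝_t(u_t) + θ𝓝̄_t(u_t)` on `ℤ`, with an exponential
dichotomy (H1), globally Lipschitz nonlinearities vanishing at `0` (H2),
`δ ∈ (4KL, (β−α)/2]` and additionally `L < δ/(6K)`, the zero sequence is the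
only `γ`-bounded entire solution for every `γ ∈ [α+δ, β−δ]` and every
admissible parameter `θ`. -/
theorem stmt_17 {X : Type*} [NormedAddCommGroup X] [NormedSpace ℝ X]
    [CompleteSpace X]
    (𝓛 : ℤ → X →L[ℝ] X) (P : ℤ → X →L[ℝ] X)
    (K α β : ℝ) (hK : 1 ≤ K) (hα : 0 < α) (hαβ : α < β)
    -- (H1): invariant family of projections and exponential dichotomy
    (hP : ∀ t : ℤ, (P t).comp (P t) = P t)
    (hcomm : ∀ t : ℤ, (P (t + 1)).comp (𝓛 t) = (𝓛 t).comp (P t))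
    (hiso : ∀ t : ℤ,
      Set.BijOn (𝓛 t) (LinearMap.ker (P t : X →ₗ[ℝ] X) : Set X) (LinearMap.ker (P (t + 1) : X →ₗ[ℝ] X) : Set X))
    (Φ : ℤ → ℤ → X →L[ℝ] X)
    (hΦ0 : ∀ t, Φ t t = ContinuousLinearMap.id ℝ X)
    (hΦrec : ∀ s t, s ≤ t → Φ (t + 1) s = (𝓛 t).comp (Φ t s))
    (hdich₁ : ∀ s t, s ≤ t → ‖(Φ t s).comp (P s)‖ ≤ K * α ^ (t - s))
    (Ψ : ℤ → ℤ → X →L[ℝ] X)  -- `Ψ s t = (Φ(t,s)|_{ker P_s})⁻¹ (id − P_t)`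
    (hΨker : ∀ s t, s ≤ t → ∀ x, Ψ s t x ∈ LinearMap.ker (P s : X →ₗ[ℝ] X))
    (hΨinv : ∀ s t, s ≤ t → ∀ x, Φ t s (Ψ s t x) = x - P t x)
    (hdich₂ : ∀ s t, s ≤ t → ‖Ψ s t‖ ≤ K * β ^ (s - t))
    -- (H2): nonlinearities
    (𝓝 𝓝' : ℤ → X → X)
    (h𝓝0 : ∀ t : ℤ, 𝓝 t 0 = 0 ∧ 𝓝' t 0 = 0)
    (L L' : ℝ) (hL0 : 0 ≤ L) (hL'0 : 0 ≤ L')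
    (hLip : ∀ t : ℤ, LipschitzWith (Real.toNNReal L) (𝓝 t))
    (hLip' : ∀ t : ℤ, LipschitzWith (Real.toNNReal L') (𝓝' t))
    -- spectral gap and strengthened smallness
    (δ : ℝ) (hδ₁ : 4 * K * L < δ) (hδ₂ : δ ≤ (β - α) / 2)
    (hsmall : L < δ / (6 * K)) :
    ∀ θ : ℝ, L' * |θ| ≤ L →
      ∀ γ ∈ Set.Icc (α + δ) (β - δ),
        ∀ φ : ℤ → X,
          (∀ t : ℤ, φ (t + 1) = 𝓛 t (φ t) + 𝓝 t (φ t) + θ • 𝓝' t (φ t)) →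
          (∃ C : ℝ, ∀ t : ℤ, γ ^ (-t) * ‖φ t‖ ≤ C) →
          ∀ t : ℤ, φ t = 0 := by
  intro θ hθ γ hγ φ hrec hCex
  obtain ⟨C, hC⟩ := hCex
  obtain ⟨hγ1, hγ2⟩ := hγ
  have hKpos : (0:ℝ) < K := lt_of_lt_of_le one_pos hK
  have hδpos : (0:ℝ) < δ := lt_of_le_of_lt (by positivity) hδ₁
  have hγpos : (0:ℝ) < γ := by linarith
  have hβpos : (0:ℝ) < β := by linarith
  have hαγ : α < γ := by linarith
  have hγβ : γ < β := by linarith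
  have hγα : δ ≤ γ - α := by linarith
  have hβγ : δ ≤ β - γ := by linarith
  -- the nonlinearity
  set F : ℤ → X → X := fun r x => 𝓝 r x + θ • 𝓝' r x with hF
  have hFrec : ∀ t : ℤ, φ (t + 1) = 𝓛 t (φ t) + F t (φ t) := by
    intro t; rw [hrec t, hF, add_assoc]
  have hN : ∀ (r : ℤ) (x : X), ‖𝓝 r x‖ ≤ L * ‖x‖ := by
    intro r x
    have h := (hLip r).dist_le_mul x 0
    rw [(h𝓝0 r).1] at h
    simpa [dist_zero_right, Real.coe_toNNReal L hL0] using h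
  have hN' : ∀ (r : ℤ) (x : X), ‖𝓝' r x‖ ≤ L' * ‖x‖ := by
    intro r x
    have h := (hLip' r).dist_le_mul x 0
    rw [(h𝓝0 r).2] at h
    simpa [dist_zero_right, Real.coe_toNNReal L' hL'0] using h
  have hFnorm : ∀ (r : ℤ) (x : X), ‖F r x‖ ≤ 2 * L * ‖x‖ := by
    intro r x
    have h1 : ‖F r x‖ ≤ ‖𝓝 r x‖ + ‖θ • 𝓝' r x‖ := norm_add_le _ _
    have h2 : ‖θ • 𝓝' r x‖ = |θ| * ‖𝓝' r x‖ := by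
      rw [norm_smul, Real.norm_eq_abs]
    have h3 : |θ| * ‖𝓝' r x‖ ≤ |θ| * (L' * ‖x‖) :=
      mul_le_mul_of_nonneg_left (hN' r x) (abs_nonneg θ)
    have h4 : |θ| * (L' * ‖x‖) ≤ L * ‖x‖ := by
      have := mul_le_mul_of_nonneg_right hθ (norm_nonneg x)
      nlinarith [norm_nonneg x]
    have h5 := hN r x
    linarith
  -- the sup
  set g : ℤ → ℝ := fun t => γ ^ (-t) * ‖φ t‖ with hg
  have hBdd : BddAbove (Set.range g) := ⟨C, by rintro _ ⟨t, rfl⟩; exact hC t⟩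
  set M : ℝ := sSup (Set.range g) with hM
  have hgM : ∀ t : ℤ, γ ^ (-t) * ‖φ t‖ ≤ M := fun t => le_csSup hBdd ⟨t, rfl⟩
  have hM0 : 0 ≤ M := le_trans (by positivity) (hgM 0)
  have hφM : ∀ r : ℤ, ‖φ r‖ ≤ M * γ ^ r := by
    intro r
    have h := hgM r
    have hp : (0:ℝ) < γ ^ r := zpow_pos hγpos r
    have hp2 : (0:ℝ) < γ ^ (-r) := zpow_pos hγpos _
    have hinv : γ ^ (-r) * γ ^ r = 1 := by
      rw [← zpow_add₀ hγpos.ne']; simp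
    nlinarith [norm_nonneg (φ r)]
  -- basic consequences of (H1)
  have hPcomm : ∀ s t : ℤ, s ≤ t → ∀ x : X, P t (Φ t s x) = Φ t s (P s x) := by
    intro s t hst x
    exact ContinuousLinearMap.ext_iff.mp (aux_comm 𝓛 P hcomm Φ hΦ0 hΦrec s t hst) x
  have hvoc := aux_voc 𝓛 Φ hΦ0 hΦrec F φ hFrec
  have hbij := aux_bij 𝓛 P hiso Φ hΦ0 hΦrec
  -- key Ψ ∘ Φ identity
  have hΨPhi : ∀ t u s : ℤ, t ≤ u → u ≤ s → ∀ x : X, Ψ t s (Φ s u x) = Ψ t u x := by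
    intro t u s htu hus x
    have hts : t ≤ s := htu.trans hus
    have hker1 : Ψ t s (Φ s u x) ∈ (LinearMap.ker (P t : X →ₗ[ℝ] X) : Set X) := hΨker t s hts _
    have hker2 : Ψ t u x ∈ (LinearMap.ker (P t : X →ₗ[ℝ] X) : Set X) := hΨker t u htu _
    refine (hbij t s hts).injOn hker1 hker2 ?_
    show Φ s t (Ψ t s (Φ s u x)) = Φ s t (Ψ t u x)
    rw [hΨinv t s hts]
    rw [hPcomm u s hus x]
    have hco := aux_cocycle 𝓛 Φ hΦ0 hΦrec t u s htu hus
    calc Φ s u x - Φ s u (P u x) = Φ s u (x - P u x) := by rw [map_sub]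
      _ = Φ s u (Φ u t (Ψ t u x)) := by rw [hΨinv t u htu]
      _ = Φ s t (Ψ t u x) := by rw [hco]; rfl
  -- zpow helpers
  have hqs : ∀ e : ℤ, (α / γ) ^ e = α ^ e * γ ^ (-e) := by
    intro e; rw [div_zpow, div_eq_mul_inv, zpow_neg]
  have hqu : ∀ e : ℤ, (γ / β) ^ e = γ ^ e * β ^ (-e) := by
    intro e; rw [div_zpow, div_eq_mul_inv, zpow_neg]
  have hqs0 : 0 < α / γ := by positivity
  have hqs1 : α / γ < 1 := (div_lt_one hγpos).mpr hαγ
  have hqu0 : 0 < γ / β := by positivity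
  have hqu1 : γ / β < 1 := (div_lt_one hβpos).mpr hγβ
  -- stable estimate
  have estA : ∀ s t : ℤ, s ≤ t →
      γ ^ (-t) * ‖P t (φ t)‖ ≤ K * (α / γ) ^ (t - s) * M + 2 * (K * L / δ) * M := by
    intro s t hst
    have hPt : P t (φ t) = Φ t s (P s (φ s)) +
        ∑ r ∈ Finset.Ico s t, Φ t (r + 1) (P (r + 1) (F r (φ r))) := by
      rw [hvoc s t hst, map_add, map_sum]
      congr 1
      · exact hPcomm s t hst (φ s)
      · refine Finset.sum_congr rfl fun r hr => ?_
        rw [Finset.mem_Ico] at hr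
        exact hPcomm (r + 1) t (by omega) _
    have hn1 : ‖Φ t s (P s (φ s))‖ ≤ K * α ^ (t - s) * (M * γ ^ s) := by
      calc ‖Φ t s (P s (φ s))‖ = ‖((Φ t s).comp (P s)) (φ s)‖ := rfl
        _ ≤ ‖(Φ t s).comp (P s)‖ * ‖φ s‖ := ContinuousLinearMap.le_opNorm _ _
        _ ≤ K * α ^ (t - s) * (M * γ ^ s) := by
            refine mul_le_mul (hdich₁ s t hst) (hφM s) (norm_nonneg _) ?_
            positivity
    have hn2 : ∀ r ∈ Finset.Ico s t, ‖Φ t (r + 1) (P (r + 1) (F r (φ r)))‖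
        ≤ 2 * K * L * M * (α ^ (t - 1 - r) * γ ^ r) := by
      intro r hr
      rw [Finset.mem_Ico] at hr
      have hb := hdich₁ (r + 1) t (by omega)
      have he : (t - (r + 1) : ℤ) = t - 1 - r := by ring
      rw [he] at hb
      have hFb : ‖F r (φ r)‖ ≤ 2 * L * (M * γ ^ r) := by
        have := hFnorm r (φ r)
        have := hφM r
        nlinarith [norm_nonneg (φ r), zpow_pos hγpos r]
      calc ‖Φ t (r + 1) (P (r + 1) (F r (φ r)))‖
          = ‖((Φ t (r + 1)).comp (P (r + 1))) (F r (φ r))‖ := rfl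
        _ ≤ ‖(Φ t (r + 1)).comp (P (r + 1))‖ * ‖F r (φ r)‖ :=
            ContinuousLinearMap.le_opNorm _ _
        _ ≤ (K * α ^ (t - 1 - r)) * (2 * L * (M * γ ^ r)) := by
            refine mul_le_mul hb hFb (norm_nonneg _) ?_
            positivity
        _ = 2 * K * L * M * (α ^ (t - 1 - r) * γ ^ r) := by ring
    have hnorm : ‖P t (φ t)‖ ≤ K * α ^ (t - s) * (M * γ ^ s) +
        ∑ r ∈ Finset.Ico s t, 2 * K * L * M * (α ^ (t - 1 - r) * γ ^ r) := by
      rw [hPt]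
      exact (norm_add_le _ _).trans
        (add_le_add hn1 ((norm_sum_le _ _).trans (Finset.sum_le_sum hn2)))
    have hγt : (0:ℝ) < γ ^ (-t) := zpow_pos hγpos _
    have step := mul_le_mul_of_nonneg_left hnorm hγt.le
    have id1 : γ ^ (-t) * (K * α ^ (t - s) * (M * γ ^ s)) = K * (α / γ) ^ (t - s) * M := by
      have e1 : γ ^ (-t) * γ ^ s = γ ^ (-(t - s)) := by
        rw [← zpow_add₀ hγpos.ne']; congr 1; ring
      calc γ ^ (-t) * (K * α ^ (t - s) * (M * γ ^ s))
          = K * (α ^ (t - s) * (γ ^ (-t) * γ ^ s)) * M := by ring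
        _ = K * (α ^ (t - s) * γ ^ (-(t - s))) * M := by rw [e1]
        _ = K * (α / γ) ^ (t - s) * M := by rw [hqs]
    have id2 : ∀ r : ℤ, γ ^ (-t) * (2 * K * L * M * (α ^ (t - 1 - r) * γ ^ r))
        = (2 * K * L * M * γ⁻¹) * (α / γ) ^ (t - 1 - r) := by
      intro r
      have e1 : γ ^ (-t) * γ ^ r = γ ^ (-1 : ℤ) * γ ^ (-(t - 1 - r)) := by
        rw [← zpow_add₀ hγpos.ne', ← zpow_add₀ hγpos.ne']; congr 1; ring
      calc γ ^ (-t) * (2 * K * L * M * (α ^ (t - 1 - r) * γ ^ r))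
          = 2 * K * L * M * (α ^ (t - 1 - r) * (γ ^ (-t) * γ ^ r)) := by ring
        _ = 2 * K * L * M * (α ^ (t - 1 - r) * (γ ^ (-1 : ℤ) * γ ^ (-(t - 1 - r)))) := by
            rw [e1]
        _ = (2 * K * L * M * γ⁻¹) * (α ^ (t - 1 - r) * γ ^ (-(t - 1 - r))) := by
            rw [zpow_neg_one]; ring
        _ = (2 * K * L * M * γ⁻¹) * (α / γ) ^ (t - 1 - r) := by rw [hqs]
    have hsum : γ ^ (-t) * ∑ r ∈ Finset.Ico s t, 2 * K * L * M * (α ^ (t - 1 - r) * γ ^ r)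
        = (2 * K * L * M * γ⁻¹) * ∑ r ∈ Finset.Ico s t, (α / γ) ^ (t - 1 - r) := by
      rw [Finset.mul_sum, Finset.mul_sum]
      exact Finset.sum_congr rfl fun r _ => id2 r
    have hgeo := aux_geom_stable hqs0 hqs1 s t hst
    have hsum2 : (2 * K * L * M * γ⁻¹) * ∑ r ∈ Finset.Ico s t, (α / γ) ^ (t - 1 - r)
        ≤ 2 * (K * L / δ) * M := by
      have hc0 : 0 ≤ 2 * K * L * M * γ⁻¹ := by positivity
      have h1 : (2 * K * L * M * γ⁻¹) * ∑ r ∈ Finset.Ico s t, (α / γ) ^ (t - 1 - r)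
          ≤ (2 * K * L * M * γ⁻¹) * (1 - α / γ)⁻¹ := mul_le_mul_of_nonneg_left hgeo hc0
      have h2 : (2 * K * L * M * γ⁻¹) * (1 - α / γ)⁻¹ = 2 * K * L * M * (γ - α)⁻¹ := by
        have h3 : 1 - α / γ = (γ - α) / γ := by field_simp
        rw [h3, inv_div]
        have hγα' : (0:ℝ) < γ - α := by linarith
        field_simp
      have h4 : (γ - α)⁻¹ ≤ δ⁻¹ := by
        exact inv_anti₀ hδpos hγα
      have h5 : 2 * K * L * M * (γ - α)⁻¹ ≤ 2 * K * L * M * δ⁻¹ := by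
        apply mul_le_mul_of_nonneg_left h4; positivity
      have h6 : 2 * K * L * M * δ⁻¹ = 2 * (K * L / δ) * M := by
        rw [div_eq_mul_inv]; ring
      linarith
    calc γ ^ (-t) * ‖P t (φ t)‖
        ≤ γ ^ (-t) * (K * α ^ (t - s) * (M * γ ^ s) +
          ∑ r ∈ Finset.Ico s t, 2 * K * L * M * (α ^ (t - 1 - r) * γ ^ r)) := step
      _ = K * (α / γ) ^ (t - s) * M +
          (2 * K * L * M * γ⁻¹) * ∑ r ∈ Finset.Ico s t, (α / γ) ^ (t - 1 - r) := by
          rw [mul_add, id1, hsum]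
      _ ≤ K * (α / γ) ^ (t - s) * M + 2 * (K * L / δ) * M := by linarith
  -- unstable estimate
  have estB : ∀ t s : ℤ, t ≤ s →
      γ ^ (-t) * ‖φ t - P t (φ t)‖ ≤ K * (γ / β) ^ (s - t) * M + 2 * (K * L / δ) * M := by
    intro t s hts
    have h0 : ∀ x : X, Ψ t t x = x - P t x := by
      intro x
      have h := hΨinv t t le_rfl x
      rwa [hΦ0 t] at h
    have hPt : φ t - P t (φ t) = Ψ t s (φ s) -
        ∑ r ∈ Finset.Ico t s, Ψ t (r + 1) (F r (φ r)) := by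
      have h1 : Φ s t (φ t) = φ s - ∑ r ∈ Finset.Ico t s, Φ s (r + 1) (F r (φ r)) :=
        eq_sub_of_add_eq (hvoc t s hts).symm
      calc φ t - P t (φ t) = Ψ t t (φ t) := (h0 (φ t)).symm
        _ = Ψ t s (Φ s t (φ t)) := (hΨPhi t t s le_rfl hts (φ t)).symm
        _ = Ψ t s (φ s) - Ψ t s (∑ r ∈ Finset.Ico t s, Φ s (r + 1) (F r (φ r))) := by
            rw [h1, map_sub]
        _ = Ψ t s (φ s) - ∑ r ∈ Finset.Ico t s, Ψ t (r + 1) (F r (φ r)) := by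
            rw [map_sum]
            congr 1
            refine Finset.sum_congr rfl fun r hr => ?_
            rw [Finset.mem_Ico] at hr
            exact hΨPhi t (r + 1) s (by omega) (by omega) _
    have hn1 : ‖Ψ t s (φ s)‖ ≤ K * β ^ (t - s) * (M * γ ^ s) := by
      calc ‖Ψ t s (φ s)‖ ≤ ‖Ψ t s‖ * ‖φ s‖ := ContinuousLinearMap.le_opNorm _ _
        _ ≤ K * β ^ (t - s) * (M * γ ^ s) := by
            refine mul_le_mul (hdich₂ t s hts) (hφM s) (norm_nonneg _) ?_
            positivity
    have hn2 : ∀ r ∈ Finset.Ico t s, ‖Ψ t (r + 1) (F r (φ r))‖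
        ≤ 2 * K * L * M * (β ^ (t - 1 - r) * γ ^ r) := by
      intro r hr
      rw [Finset.mem_Ico] at hr
      have hb := hdich₂ t (r + 1) (by omega)
      have he : (t - (r + 1) : ℤ) = t - 1 - r := by ring
      rw [he] at hb
      have hFb : ‖F r (φ r)‖ ≤ 2 * L * (M * γ ^ r) := by
        have := hFnorm r (φ r)
        have := hφM r
        nlinarith [norm_nonneg (φ r), zpow_pos hγpos r]
      calc ‖Ψ t (r + 1) (F r (φ r))‖ ≤ ‖Ψ t (r + 1)‖ * ‖F r (φ r)‖ :=
            ContinuousLinearMap.le_opNorm _ _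
        _ ≤ (K * β ^ (t - 1 - r)) * (2 * L * (M * γ ^ r)) := by
            refine mul_le_mul hb hFb (norm_nonneg _) ?_
            positivity
        _ = 2 * K * L * M * (β ^ (t - 1 - r) * γ ^ r) := by ring
    have hnorm : ‖φ t - P t (φ t)‖ ≤ K * β ^ (t - s) * (M * γ ^ s) +
        ∑ r ∈ Finset.Ico t s, 2 * K * L * M * (β ^ (t - 1 - r) * γ ^ r) := by
      rw [hPt]
      exact (norm_sub_le _ _).trans
        (add_le_add hn1 ((norm_sum_le _ _).trans (Finset.sum_le_sum hn2)))
    have hγt : (0:ℝ) < γ ^ (-t) := zpow_pos hγpos _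
    have step := mul_le_mul_of_nonneg_left hnorm hγt.le
    have id1 : γ ^ (-t) * (K * β ^ (t - s) * (M * γ ^ s)) = K * (γ / β) ^ (s - t) * M := by
      have e1 : γ ^ (-t) * γ ^ s = γ ^ (s - t) := by
        rw [← zpow_add₀ hγpos.ne']; congr 1; ring
      have e2 : (t - s : ℤ) = -(s - t) := by ring
      calc γ ^ (-t) * (K * β ^ (t - s) * (M * γ ^ s))
          = K * ((γ ^ (-t) * γ ^ s) * β ^ (t - s)) * M := by ring
        _ = K * (γ ^ (s - t) * β ^ (-(s - t))) * M := by rw [e1, e2]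
        _ = K * (γ / β) ^ (s - t) * M := by rw [hqu]
    have id2 : ∀ r : ℤ, γ ^ (-t) * (2 * K * L * M * (β ^ (t - 1 - r) * γ ^ r))
        = (2 * K * L * M * β⁻¹) * (γ / β) ^ (r - t) := by
      intro r
      have e1 : γ ^ (-t) * γ ^ r = γ ^ (r - t) := by
        rw [← zpow_add₀ hγpos.ne']; congr 1; ring
      have e2 : (β : ℝ) ^ (t - 1 - r) = β ^ (-1 : ℤ) * β ^ (-(r - t)) := by
        rw [← zpow_add₀ hβpos.ne']; congr 1; ring
      calc γ ^ (-t) * (2 * K * L * M * (β ^ (t - 1 - r) * γ ^ r))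
          = 2 * K * L * M * (β ^ (t - 1 - r) * (γ ^ (-t) * γ ^ r)) := by ring
        _ = 2 * K * L * M * ((β ^ (-1 : ℤ) * β ^ (-(r - t))) * γ ^ (r - t)) := by
            rw [e1, e2]
        _ = (2 * K * L * M * β⁻¹) * (γ ^ (r - t) * β ^ (-(r - t))) := by
            rw [zpow_neg_one]; ring
        _ = (2 * K * L * M * β⁻¹) * (γ / β) ^ (r - t) := by rw [hqu]
    have hsum : γ ^ (-t) * ∑ r ∈ Finset.Ico t s, 2 * K * L * M * (β ^ (t - 1 - r) * γ ^ r)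
        = (2 * K * L * M * β⁻¹) * ∑ r ∈ Finset.Ico t s, (γ / β) ^ (r - t) := by
      rw [Finset.mul_sum, Finset.mul_sum]
      exact Finset.sum_congr rfl fun r _ => id2 r
    have hgeo := aux_geom_unstable hqu0 hqu1 t s hts
    have hsum2 : (2 * K * L * M * β⁻¹) * ∑ r ∈ Finset.Ico t s, (γ / β) ^ (r - t)
        ≤ 2 * (K * L / δ) * M := by
      have hc0 : 0 ≤ 2 * K * L * M * β⁻¹ := by positivity
      have h1 : (2 * K * L * M * β⁻¹) * ∑ r ∈ Finset.Ico t s, (γ / β) ^ (r - t)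
          ≤ (2 * K * L * M * β⁻¹) * (1 - γ / β)⁻¹ := mul_le_mul_of_nonneg_left hgeo hc0
      have h2 : (2 * K * L * M * β⁻¹) * (1 - γ / β)⁻¹ = 2 * K * L * M * (β - γ)⁻¹ := by
        have h3 : 1 - γ / β = (β - γ) / β := by field_simp
        rw [h3, inv_div]
        have hβγ' : (0:ℝ) < β - γ := by linarith
        field_simp
      have h4 : (β - γ)⁻¹ ≤ δ⁻¹ := inv_anti₀ hδpos hβγ
      have h5 : 2 * K * L * M * (β - γ)⁻¹ ≤ 2 * K * L * M * δ⁻¹ := by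
        apply mul_le_mul_of_nonneg_left h4; positivity
      have h6 : 2 * K * L * M * δ⁻¹ = 2 * (K * L / δ) * M := by
        rw [div_eq_mul_inv]; ring
      linarith
    calc γ ^ (-t) * ‖φ t - P t (φ t)‖
        ≤ γ ^ (-t) * (K * β ^ (t - s) * (M * γ ^ s) +
          ∑ r ∈ Finset.Ico t s, 2 * K * L * M * (β ^ (t - 1 - r) * γ ^ r)) := step
      _ = K * (γ / β) ^ (s - t) * M +
          (2 * K * L * M * β⁻¹) * ∑ r ∈ Finset.Ico t s, (γ / β) ^ (r - t) := by
          rw [mul_add, id1, hsum]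
      _ ≤ K * (γ / β) ^ (s - t) * M + 2 * (K * L / δ) * M := by linarith
  -- pass to the limit
  have hfinal : ∀ t : ℤ, γ ^ (-t) * ‖φ t‖ ≤ 4 * (K * L / δ) * M := by
    intro t
    have hbound : ∀ n : ℕ, γ ^ (-t) * ‖φ t‖
        ≤ K * (α / γ) ^ n * M + (K * (γ / β) ^ n * M + 4 * (K * L / δ) * M) := by
      intro n
      have hA := estA (t - n) t (by omega)
      have hB := estB t (t + n) (by omega)
      rw [show (t - (t - (n : ℤ))) = (n : ℤ) by ring, zpow_natCast] at hA
      rw [show ((t + (n : ℤ)) - t) = (n : ℤ) by ring, zpow_natCast] at hB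
      have hsplit : γ ^ (-t) * ‖φ t‖
          ≤ γ ^ (-t) * ‖P t (φ t)‖ + γ ^ (-t) * ‖φ t - P t (φ t)‖ := by
        have h1 : ‖φ t‖ ≤ ‖P t (φ t)‖ + ‖φ t - P t (φ t)‖ := by
          have h2 := norm_add_le (P t (φ t)) (φ t - P t (φ t))
          have h3 : P t (φ t) + (φ t - P t (φ t)) = φ t := by abel
          rwa [h3] at h2
        rw [← mul_add]
        exact mul_le_mul_of_nonneg_left h1 (zpow_pos hγpos (-t)).le
      linarith
    have h1 : Filter.Tendsto (fun n : ℕ => (α / γ) ^ n) Filter.atTop (nhds 0) :=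
      tendsto_pow_atTop_nhds_zero_of_lt_one hqs0.le hqs1
    have h2 : Filter.Tendsto (fun n : ℕ => (γ / β) ^ n) Filter.atTop (nhds 0) :=
      tendsto_pow_atTop_nhds_zero_of_lt_one hqu0.le hqu1
    have hlim : Filter.Tendsto
        (fun n : ℕ => K * (α / γ) ^ n * M + (K * (γ / β) ^ n * M + 4 * (K * L / δ) * M))
        Filter.atTop (nhds (4 * (K * L / δ) * M)) := by
      have h3 := ((h1.const_mul K).mul_const M).add
        (((h2.const_mul K).mul_const M).add_const (4 * (K * L / δ) * M))
      simpa using h3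
    exact ge_of_tendsto' hlim hbound
  -- conclude
  have hMle : M ≤ 4 * (K * L / δ) * M := by
    refine csSup_le ⟨g 0, ⟨0, rfl⟩⟩ ?_
    rintro x ⟨t, rfl⟩
    exact hfinal t
  have hc1 : 4 * (K * L / δ) < 1 := by
    rw [show 4 * (K * L / δ) = 4 * K * L / δ by ring]
    exact (div_lt_one hδpos).mpr hδ₁
  have hc0 : 0 ≤ 4 * (K * L / δ) := by positivity
  have hMzero : M ≤ 0 := by nlinarith
  intro t
  have h := hgM t
  have hpos : (0:ℝ) < γ ^ (-t) := zpow_pos hγpos _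
  have hle : ‖φ t‖ ≤ 0 := by nlinarith [norm_nonneg (φ t)]
  exact norm_le_zero_iff.mp hle
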